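/- (Invariance constraints preserve optimality of the target policy.) In a finite discounted MDP, let π^T be a deterministic policy that is optimal under the reward function R̄, and let R be another reward function satisfying Q^{π^T}_R(s,a) − V^{π^T}_R(s) ≤ Q^{π^T}_{R̄}(s,a) − V^{π^T}_{R̄}(s) for all states s and actions a. Then π^T is an optimal policy under R. -/

import Mathlib

set_option linter.unusedSectionVars false


open scoped BigOperators

structure MDP (S A : Type*) [Fintype S] [Fintype A] where
  T : S → A → S → ℝ
  T_nonneg : ∀ s a s', 0 ≤ T s a s'
  T_sum_one : ∀ s a, ∑ s', T s a s' = 1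
  P0 : S → ℝ
  P0_nonneg : ∀ s, 0 ≤ P0 s
  P0_sum_one : ∑ s, P0 s = 1
  disc : ℝ
  disc_nonneg : 0 ≤ disc
  disc_lt_one : disc < 1

variable {S A : Type*} [Fintype S] [Fintype A] [DecidableEq S] [DecidableEq A]

def IsPolicy (π : S → A → ℝ) : Prop :=
  (∀ s a, 0 ≤ π s a) ∧ ∀ s, ∑ a, π s a = 1

def detPol (π : S → A) : S → A → ℝ := fun s a => if a = π s then 1 else 0

def stateDist (M : MDP S A) (π : S → A → ℝ) (s0 : S) : ℕ → S → ℝ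
  | 0 => fun s => if s = s0 then 1 else 0
  | (t+1) => fun s' => ∑ s, ∑ a, stateDist M π s0 t s * π s a * M.T s a s'

noncomputable def Val (M : MDP S A) (π : S → A → ℝ) (R : S → A → ℝ) (s0 : S) : ℝ :=
  ∑' t : ℕ, M.disc ^ t * ∑ s, stateDist M π s0 t s * ∑ a, π s a * R s a

noncomputable def Qval (M : MDP S A) (π : S → A → ℝ) (R : S → A → ℝ) (s : S) (a : A) : ℝ :=
  R s a + M.disc * ∑ s', M.T s a s' * Val M π R s'

noncomputable def Adv (M : MDP S A) (π : S → A → ℝ) (R : S → A → ℝ) (s : S) (a : A) : ℝ :=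
  Qval M π R s a - Val M π R s

noncomputable def Vstar (M : MDP S A) (R : S → A → ℝ) (s : S) : ℝ :=
  sSup {v : ℝ | ∃ π, IsPolicy π ∧ Val M π R s = v}

def IsOptimal (M : MDP S A) (R : S → A → ℝ) (π : S → A → ℝ) : Prop :=
  ∀ s, Val M π R s = Vstar M R s

noncomputable def dOcc (M : MDP S A) (π : S → A → ℝ) (s0 : S) (s : S) : ℝ :=
  (1 - M.disc) * ∑' t : ℕ, M.disc ^ t * stateDist M π s0 t s

noncomputable def dP0 (M : MDP S A) (π : S → A → ℝ) (s : S) : ℝ :=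
  ∑ s0, M.P0 s0 * dOcc M π s0 s

noncomputable def Qh (M : MDP S A) (π : S → A → ℝ) (R : S → A → ℝ) : ℕ → S → A → ℝ
  | 0 => R
  | (h+1) => fun s a =>
      R s a + M.disc * ∑ s', M.T s a s' * ∑ a', π s' a' * Qh M π R h s' a'

noncomputable def Vh (M : MDP S A) (π : S → A → ℝ) (R : S → A → ℝ) (h : ℕ) (s : S) : ℝ :=
  ∑ a, π s a * Qh M π R h s a

noncomputable def Advh (M : MDP S A) (π : S → A → ℝ) (R : S → A → ℝ) (h : ℕ) (s : S) (a : A) : ℝ :=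
  Qh M π R h s a - Vh M π R h s

noncomputable def softmax (θ : EuclideanSpace ℝ (S × A)) (s : S) (a : A) : ℝ :=
  Real.exp (θ (s, a)) / ∑ b, Real.exp (θ (s, b))

noncomputable def gradLogSoftmax (θ : EuclideanSpace ℝ (S × A)) (s : S) (a : A) :
    EuclideanSpace ℝ (S × A) :=
  WithLp.toLp 2 (fun p => fderiv ℝ (fun θ' => Real.log (softmax θ' s a)) θ (EuclideanSpace.single p 1))

/-- The depth-`h` informativeness criterion `I_h(R | R̄, π^T, π^L)`. -/
noncomputable def IhCrit (M : MDP S A) (Rbar : S → A → ℝ) (πT πL : S → A → ℝ)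
    (h : ℕ) (R : S → A → ℝ) : ℝ :=
  ∑ s, ∑ a, dP0 M πL s * dP0 M πT s * (πL s a) ^ 2 *
    (Adv M πT Rbar s a - ∑ a', πL s a' * Adv M πT Rbar s a') *
    Advh M πL R h s a

/-- The depth-1 informativeness criterion `I₁(R | R̄, π^T, π^L)`. -/
noncomputable def I1 (M : MDP S A) (Rbar : S → A → ℝ) (πT πL : S → A → ℝ)
    (R : S → A → ℝ) : ℝ :=
  ∑ s, ∑ a, dP0 M πL s * dP0 M πT s * (πL s a) ^ 2 *
    (Adv M πT Rbar s a - ∑ a', πL s a' * Adv M πT Rbar s a') *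
    (R s a - ∑ b, πL s b * R s b)

/-- Uniform distribution over the argmax set of `f`. -/
noncomputable def argmaxUniform (f : A → ℝ) : A → ℝ := fun a =>
  if (∀ b, f b ≤ f a) then
    ((Finset.univ.filter fun a' : A => ∀ b, f b ≤ f a').card : ℝ)⁻¹
  else 0

/-- The updated policy parameter after one policy-gradient step with reward `R`. -/
noncomputable def thetaNew (M : MDP S A) (θL : EuclideanSpace ℝ (S × A)) (α : ℝ) (h : ℕ)
    (R : S → A → ℝ) : EuclideanSpace ℝ (S × A) :=
  θL + α • ∑ s, ∑ a,
    (dP0 M (softmax θL) s * softmax θL s a * Qh M (softmax θL) R h s a) •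
      gradLogSoftmax θL s a

/-- The surrogate performance `J(π_θ; R̄, π^T)`. -/
noncomputable def Jsur (M : MDP S A) (Rbar : S → A → ℝ) (πT : S → A → ℝ)
    (θ : EuclideanSpace ℝ (S × A)) : ℝ :=
  ∑ s, dP0 M πT s * ∑ a, softmax θ s a * Adv M πT Rbar s a

-- auxiliary lemmas

lemma detPol_isPolicy (π : S → A) : IsPolicy (detPol π) := by
  constructor
  · intro s a; unfold detPol; split <;> norm_num
  · intro s; simp [detPol]

lemma sum_detPol (π : S → A) (s : S) (f : A → ℝ) :
    ∑ a, detPol π s a * f a = f (π s) := by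
  simp [detPol, ite_mul]

lemma stateDist_nonneg (M : MDP S A) (π : S → A → ℝ) (hπ0 : ∀ s a, 0 ≤ π s a)
    (s0 : S) : ∀ t s, 0 ≤ stateDist M π s0 t s := by
  intro t
  induction t with
  | zero => intro s; simp only [stateDist]; split <;> norm_num
  | succ t ih =>
      intro s'
      simp only [stateDist]
      apply Finset.sum_nonneg; intro s _
      apply Finset.sum_nonneg; intro a _
      exact mul_nonneg (mul_nonneg (ih s) (hπ0 s a)) (M.T_nonneg s a s')

lemma stateDist_sum_one (M : MDP S A) (π : S → A → ℝ) (hπ : IsPolicy π)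
    (s0 : S) : ∀ t, ∑ s, stateDist M π s0 t s = 1 := by
  intro t
  induction t with
  | zero => simp [stateDist]
  | succ t ih =>
      simp only [stateDist]
      rw [Finset.sum_comm]
      calc ∑ s, ∑ s', ∑ a, stateDist M π s0 t s * π s a * M.T s a s'
          = ∑ s, ∑ a, ∑ s', stateDist M π s0 t s * π s a * M.T s a s' := by
            congr 1; ext s; exact Finset.sum_comm

        _ = ∑ s, ∑ a, stateDist M π s0 t s * π s a := by
            congr 1; ext s; congr 1; ext a
            rw [← Finset.mul_sum, M.T_sum_one, mul_one]
        _ = ∑ s, stateDist M π s0 t s := by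
            congr 1; ext s; rw [← Finset.mul_sum, hπ.2, mul_one]
        _ = 1 := ih

lemma stateDist_le_one (M : MDP S A) (π : S → A → ℝ) (hπ : IsPolicy π)
    (s0 : S) (t : ℕ) (s : S) : stateDist M π s0 t s ≤ 1 := by
  have h1 := stateDist_sum_one M π hπ s0 t
  calc stateDist M π s0 t s ≤ ∑ s', stateDist M π s0 t s' :=
        Finset.single_le_sum (fun s' _ => stateDist_nonneg M π hπ.1 s0 t s') (Finset.mem_univ s)
    _ = 1 := h1

lemma abs_term_le (M : MDP S A) (π : S → A → ℝ) (hπ : IsPolicy π) (R : S → A → ℝ)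
    (s0 : S) (t : ℕ) :
    |∑ s, stateDist M π s0 t s * ∑ a, π s a * R s a| ≤ ∑ s, ∑ a, |R s a| := by
  calc |∑ s, stateDist M π s0 t s * ∑ a, π s a * R s a|
      ≤ ∑ s, |stateDist M π s0 t s * ∑ a, π s a * R s a| := Finset.abs_sum_le_sum_abs _ _
    _ ≤ ∑ s, ∑ a, |R s a| := by
        apply Finset.sum_le_sum; intro s _
        rw [abs_mul, abs_of_nonneg (stateDist_nonneg M π hπ.1 s0 t s)]
        calc stateDist M π s0 t s * |∑ a, π s a * R s a|
            ≤ 1 * |∑ a, π s a * R s a| := by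
              apply mul_le_mul_of_nonneg_right (stateDist_le_one M π hπ s0 t s) (abs_nonneg _)
          _ = |∑ a, π s a * R s a| := one_mul _
          _ ≤ ∑ a, |π s a * R s a| := Finset.abs_sum_le_sum_abs _ _
          _ ≤ ∑ a, |R s a| := by
              apply Finset.sum_le_sum; intro a _
              rw [abs_mul, abs_of_nonneg (hπ.1 s a)]
              calc π s a * |R s a| ≤ 1 * |R s a| := by
                    apply mul_le_mul_of_nonneg_right _ (abs_nonneg _)
                    calc π s a ≤ ∑ b, π s b :=
                          Finset.single_le_sum (fun b _ => hπ.1 s b) (Finset.mem_univ a)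
                      _ = 1 := hπ.2 s
                _ = |R s a| := one_mul _

lemma summable_val (M : MDP S A) (π : S → A → ℝ) (hπ : IsPolicy π) (R : S → A → ℝ)
    (s0 : S) :
    Summable (fun t : ℕ => M.disc ^ t * ∑ s, stateDist M π s0 t s * ∑ a, π s a * R s a) := by
  apply Summable.of_norm_bounded (g := fun t : ℕ => M.disc ^ t * ∑ s, ∑ a, |R s a|)
  · exact (summable_geometric_of_lt_one M.disc_nonneg M.disc_lt_one).mul_right _
  · intro t
    rw [Real.norm_eq_abs, abs_mul, abs_pow, abs_of_nonneg M.disc_nonneg]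
    exact mul_le_mul_of_nonneg_left (abs_term_le M π hπ R s0 t) (pow_nonneg M.disc_nonneg t)

lemma sum_rot3 {ι κ μ : Type*} [Fintype ι] [Fintype κ] [Fintype μ]
    (f : ι → κ → μ → ℝ) :
    ∑ x, ∑ y, ∑ z, f x y z = ∑ y, ∑ z, ∑ x, f x y z := by
  rw [Finset.sum_comm]
  exact Finset.sum_congr rfl fun y _ => Finset.sum_comm

lemma sum_swap4 {ι κ μ ν : Type*} [Fintype ι] [Fintype κ] [Fintype μ] [Fintype ν]
    (f : ι → κ → μ → ν → ℝ) :
    ∑ x, ∑ y, ∑ z, ∑ w, f x y z w = ∑ z, ∑ w, ∑ x, ∑ y, f x y z w := by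
  calc ∑ x, ∑ y, ∑ z, ∑ w, f x y z w
      = ∑ x, ∑ z, ∑ w, ∑ y, f x y z w :=
        Finset.sum_congr rfl fun x _ => sum_rot3 _
    _ = ∑ z, ∑ x, ∑ w, ∑ y, f x y z w := Finset.sum_comm
    _ = ∑ z, ∑ w, ∑ y, ∑ x, f x y z w :=
        Finset.sum_congr rfl fun z _ => sum_rot3 _
    _ = ∑ z, ∑ w, ∑ x, ∑ y, f x y z w :=
        Finset.sum_congr rfl fun z _ => Finset.sum_congr rfl fun w _ => Finset.sum_comm

lemma markov (M : MDP S A) (π : S → A → ℝ) (s0 : S) (t : ℕ) (s : S) :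
    stateDist M π s0 (t+1) s = ∑ a, π s0 a * ∑ s1, M.T s0 a s1 * stateDist M π s1 t s := by
  induction t generalizing s with
  | zero =>
      show ∑ s1, ∑ a, stateDist M π s0 0 s1 * π s1 a * M.T s1 a s = _
      simp only [stateDist, ite_mul, one_mul, zero_mul, mul_ite, mul_one, mul_zero]
      rw [Finset.sum_comm]
      simp
  | succ t ih =>
      show ∑ s', ∑ a, stateDist M π s0 (t+1) s' * π s' a * M.T s' a s = _
      calc ∑ s', ∑ a, stateDist M π s0 (t+1) s' * π s' a * M.T s' a s
          = ∑ s', ∑ a, ∑ b, ∑ s1,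
              π s0 b * (M.T s0 b s1 * stateDist M π s1 t s') * (π s' a * M.T s' a s) := by
            refine Finset.sum_congr rfl fun s' _ => Finset.sum_congr rfl fun a _ => ?_
            rw [ih s']
            simp only [Finset.sum_mul, Finset.mul_sum]
            exact Finset.sum_congr rfl fun b _ => Finset.sum_congr rfl fun s1 _ => by ring
        _ = ∑ b, ∑ s1, ∑ s', ∑ a,
              π s0 b * (M.T s0 b s1 * stateDist M π s1 t s') * (π s' a * M.T s' a s) :=
            sum_swap4 _
        _ = ∑ b, π s0 b * ∑ s1, M.T s0 b s1 * stateDist M π s1 (t+1) s := by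
            refine Finset.sum_congr rfl fun b _ => ?_
            show _ = π s0 b * ∑ s1, M.T s0 b s1 *
              ∑ s', ∑ a, stateDist M π s1 t s' * π s' a * M.T s' a s
            simp only [Finset.mul_sum]
            exact Finset.sum_congr rfl fun s1 _ => Finset.sum_congr rfl fun s' _ =>
              Finset.sum_congr rfl fun a _ => by ring

lemma markov_sum (M : MDP S A) (π : S → A → ℝ) (r : S → ℝ) (s0 : S) (t : ℕ) :
    ∑ s, stateDist M π s0 (t+1) s * r s
      = ∑ a, π s0 a * ∑ s', M.T s0 a s' * ∑ s, stateDist M π s' t s * r s := by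
  calc ∑ s, stateDist M π s0 (t+1) s * r s
      = ∑ s, ∑ a, ∑ s1, π s0 a * (M.T s0 a s1 * stateDist M π s1 t s) * r s := by
        refine Finset.sum_congr rfl fun s _ => ?_
        rw [markov]
        simp only [Finset.sum_mul, Finset.mul_sum]
    _ = ∑ a, ∑ s1, ∑ s, π s0 a * (M.T s0 a s1 * stateDist M π s1 t s) * r s := sum_rot3 _
    _ = ∑ a, π s0 a * ∑ s', M.T s0 a s' * ∑ s, stateDist M π s' t s * r s := by
        simp only [Finset.mul_sum]
        exact Finset.sum_congr rfl fun a _ => Finset.sum_congr rfl fun s1 _ =>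
          Finset.sum_congr rfl fun s _ => by ring

lemma bellman (M : MDP S A) (π : S → A → ℝ) (hπ : IsPolicy π) (R : S → A → ℝ) (s0 : S) :
    Val M π R s0 = (∑ a, π s0 a * R s0 a)
      + M.disc * ∑ a, π s0 a * ∑ s', M.T s0 a s' * Val M π R s' := by
  have hsum := summable_val M π hπ R s0
  unfold Val
  rw [Summable.tsum_eq_zero_add hsum]
  congr 1
  · simp [stateDist, ite_mul, Finset.sum_ite_eq']
  · have key : ∀ t : ℕ,
        M.disc ^ (t+1) * ∑ s, stateDist M π s0 (t+1) s * ∑ a, π s a * R s a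
        = M.disc * ∑ a, π s0 a * ∑ s', M.T s0 a s' *
            (M.disc ^ t * ∑ s, stateDist M π s' t s * ∑ a', π s a' * R s a') := by
      intro t
      rw [pow_succ, markov_sum M π (fun s => ∑ a', π s a' * R s a') s0 t]
      simp only [Finset.mul_sum]
      refine Finset.sum_congr rfl fun a _ => Finset.sum_congr rfl fun s' _ =>
        Finset.sum_congr rfl fun s _ => Finset.sum_congr rfl fun a' _ => by ring
    have hsummand : ∀ a : A, Summable (fun t : ℕ => π s0 a * ∑ s', M.T s0 a s' *
        (M.disc ^ t * ∑ s, stateDist M π s' t s * ∑ a', π s a' * R s a')) := by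
      intro a
      apply Summable.mul_left
      apply summable_sum
      intro s' _
      exact (summable_val M π hπ R s').mul_left _
    calc ∑' t : ℕ, M.disc ^ (t+1) * ∑ s, stateDist M π s0 (t+1) s * ∑ a, π s a * R s a
        = ∑' t : ℕ, M.disc * ∑ a, π s0 a * ∑ s', M.T s0 a s' *
            (M.disc ^ t * ∑ s, stateDist M π s' t s * ∑ a', π s a' * R s a') :=
          tsum_congr key
      _ = M.disc * ∑' t : ℕ, ∑ a, π s0 a * ∑ s', M.T s0 a s' *
            (M.disc ^ t * ∑ s, stateDist M π s' t s * ∑ a', π s a' * R s a') := tsum_mul_left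
      _ = M.disc * ∑ a, ∑' t : ℕ, π s0 a * ∑ s', M.T s0 a s' *
            (M.disc ^ t * ∑ s, stateDist M π s' t s * ∑ a', π s a' * R s a') := by
          rw [Summable.tsum_finsetSum fun a _ => hsummand a]
      _ = M.disc * ∑ a, π s0 a * ∑ s', M.T s0 a s' * Val M π R s' := by
          refine congrArg _ (Finset.sum_congr rfl fun a _ => ?_)
          rw [tsum_mul_left]
          refine congrArg _ ?_
          rw [Summable.tsum_finsetSum fun s' (_ : s' ∈ Finset.univ) =>
            (summable_val M π hπ R s').mul_left (M.T s0 a s')]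
          exact Finset.sum_congr rfl fun s' _ => tsum_mul_left

lemma val_le (M : MDP S A) (π : S → A → ℝ) (hπ : IsPolicy π) (R : S → A → ℝ) (s0 : S) :
    Val M π R s0 ≤ (1 - M.disc)⁻¹ * ∑ s, ∑ a, |R s a| := by
  have hgeo : Summable (fun t : ℕ => M.disc ^ t * ∑ s, ∑ a, |R s a|) :=
    (summable_geometric_of_lt_one M.disc_nonneg M.disc_lt_one).mul_right _
  have hle : ∀ t : ℕ, M.disc ^ t * ∑ s, stateDist M π s0 t s * ∑ a, π s a * R s a
      ≤ M.disc ^ t * ∑ s, ∑ a, |R s a| := by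
    intro t
    apply mul_le_mul_of_nonneg_left _ (pow_nonneg M.disc_nonneg t)
    exact le_trans (le_abs_self _) (abs_term_le M π hπ R s0 t)
  calc Val M π R s0 ≤ ∑' t : ℕ, M.disc ^ t * ∑ s, ∑ a, |R s a| :=
        Summable.tsum_le_tsum hle (summable_val M π hπ R s0) hgeo
    _ = (1 - M.disc)⁻¹ * ∑ s, ∑ a, |R s a| := by
        rw [tsum_mul_right, tsum_geometric_of_lt_one M.disc_nonneg M.disc_lt_one]

lemma bddAbove_vals (M : MDP S A) (R : S → A → ℝ) (s : S) :
    BddAbove {v : ℝ | ∃ π, IsPolicy π ∧ Val M π R s = v} := by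
  refine ⟨(1 - M.disc)⁻¹ * ∑ s', ∑ a, |R s' a|, ?_⟩
  rintro v ⟨π, hπ, rfl⟩
  exact val_le M π hπ R s

lemma contraction_nonpos (γ : ℝ) (hγ0 : 0 ≤ γ) (hγ1 : γ < 1) (K : S → S → ℝ)
    (hK0 : ∀ s s', 0 ≤ K s s') (hK1 : ∀ s, ∑ s', K s s' = 1) (u : S → ℝ)
    (hu : ∀ s, u s ≤ γ * ∑ s', K s s' * u s') : ∀ s, u s ≤ 0 := by
  intro s
  have hne : (Finset.univ : Finset S).Nonempty := ⟨s, Finset.mem_univ s⟩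
  obtain ⟨sm, _, hmax⟩ := Finset.exists_max_image Finset.univ u hne
  have hmax' : ∀ s', u s' ≤ u sm := fun s' => hmax s' (Finset.mem_univ s')
  have h1 : ∑ s', K sm s' * u s' ≤ u sm := by
    calc ∑ s', K sm s' * u s' ≤ ∑ s', K sm s' * u sm :=
          Finset.sum_le_sum fun s' _ => mul_le_mul_of_nonneg_left (hmax' s') (hK0 sm s')
      _ = u sm := by rw [← Finset.sum_mul, hK1, one_mul]
  have h2 : u sm ≤ γ * u sm := le_trans (hu sm) (by nlinarith [hu sm, h1])
  have h3 : u sm ≤ 0 := by nlinarith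
  exact le_trans (hmax' s) h3

lemma bellman_det (M : MDP S A) (π : S → A) (R : S → A → ℝ) (s : S) :
    Val M (detPol π) R s
      = R s (π s) + M.disc * ∑ s', M.T s (π s) s' * Val M (detPol π) R s' := by
  rw [bellman M (detPol π) (detPol_isPolicy π) R s, sum_detPol, sum_detPol]

lemma sum_pol_swap (M : MDP S A) (π : S → A → ℝ) (s : S) (W : S → ℝ) :
    ∑ a, π s a * ∑ s', M.T s a s' * W s'
      = ∑ s', (∑ a, π s a * M.T s a s') * W s' := by
  simp only [Finset.mul_sum, Finset.sum_mul]
  rw [Finset.sum_comm]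
  exact Finset.sum_congr rfl fun s' _ => Finset.sum_congr rfl fun a _ => by ring

lemma optimal_of_adv_nonpos (M : MDP S A) (R : S → A → ℝ) (πT : S → A)
    (hB : ∀ s a, Qval M (detPol πT) R s a ≤ Val M (detPol πT) R s) :
    IsOptimal M R (detPol πT) := by
  intro s
  apply le_antisymm
  · exact le_csSup (bddAbove_vals M R s) ⟨detPol πT, detPol_isPolicy πT, rfl⟩
  · refine csSup_le ⟨Val M (detPol πT) R s, ⟨detPol πT, detPol_isPolicy πT, rfl⟩⟩ ?_
    rintro v ⟨π', hπ', rfl⟩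
    have main : ∀ s1, Val M π' R s1 - Val M (detPol πT) R s1 ≤
        M.disc * ∑ s', (∑ a, π' s1 a * M.T s1 a s') *
          (Val M π' R s' - Val M (detPol πT) R s') := by
      intro s1
      have hb' := bellman M π' hπ' R s1
      have hQ : ∑ a, π' s1 a * Qval M (detPol πT) R s1 a ≤ Val M (detPol πT) R s1 := by
        calc ∑ a, π' s1 a * Qval M (detPol πT) R s1 a
            ≤ ∑ a, π' s1 a * Val M (detPol πT) R s1 :=
              Finset.sum_le_sum fun a _ => mul_le_mul_of_nonneg_left (hB s1 a) (hπ'.1 s1 a)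
          _ = Val M (detPol πT) R s1 := by rw [← Finset.sum_mul, hπ'.2, one_mul]
      have hexp : ∑ a, π' s1 a * Qval M (detPol πT) R s1 a
          = (∑ a, π' s1 a * R s1 a)
            + M.disc * ∑ a, π' s1 a * ∑ s', M.T s1 a s' * Val M (detPol πT) R s' := by
        unfold Qval
        simp only [mul_add, Finset.sum_add_distrib]
        congr 1
        rw [Finset.mul_sum]
        exact Finset.sum_congr rfl fun a _ => by ring
      have hsub : ∑ s', (∑ a, π' s1 a * M.T s1 a s') *
            (Val M π' R s' - Val M (detPol πT) R s')
          = (∑ a, π' s1 a * ∑ s', M.T s1 a s' * Val M π' R s')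
            - (∑ a, π' s1 a * ∑ s', M.T s1 a s' * Val M (detPol πT) R s') := by
        rw [sum_pol_swap M π' s1 (Val M π' R), sum_pol_swap M π' s1 (Val M (detPol πT) R),
          ← Finset.sum_sub_distrib]
        exact Finset.sum_congr rfl fun s' _ => by ring
      rw [hsub, mul_sub]
      linarith
    have hK0 : ∀ s1 s', 0 ≤ ∑ a, π' s1 a * M.T s1 a s' := fun s1 s' =>
      Finset.sum_nonneg fun a _ => mul_nonneg (hπ'.1 s1 a) (M.T_nonneg s1 a s')
    have hK1 : ∀ s1, ∑ s', ∑ a, π' s1 a * M.T s1 a s' = 1 := by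
      intro s1
      rw [Finset.sum_comm]
      calc ∑ a, ∑ s', π' s1 a * M.T s1 a s'
          = ∑ a, π' s1 a := by
            refine Finset.sum_congr rfl fun a _ => ?_
            rw [← Finset.mul_sum, M.T_sum_one, mul_one]
        _ = 1 := hπ'.2 s1
    have := contraction_nonpos M.disc M.disc_nonneg M.disc_lt_one
      (fun s1 s' => ∑ a, π' s1 a * M.T s1 a s') hK0 hK1
      (fun s1 => Val M π' R s1 - Val M (detPol πT) R s1) main s
    linarith

lemma adv_nonpos_of_optimal (M : MDP S A) (Rbar : S → A → ℝ) (πT : S → A)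
    (hopt : IsOptimal M Rbar (detPol πT)) :
    ∀ s a, Qval M (detPol πT) Rbar s a ≤ Val M (detPol πT) Rbar s := by
  by_contra h
  push_neg at h
  obtain ⟨s, a, hQ⟩ := h
  set π' : S → A := fun s'' => if s'' = s then a else πT s'' with hπ'def
  have hπ's : π' s = a := by simp [hπ'def]
  have hπ'ne : ∀ s'', s'' ≠ s → π' s'' = πT s'' := by
    intro s'' h'; simp [hπ'def, h']
  have hQdef : Qval M (detPol πT) Rbar s a
      = Rbar s a + M.disc * ∑ s', M.T s a s' * Val M (detPol πT) Rbar s' := rfl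
  have main : ∀ s'', Val M (detPol πT) Rbar s'' - Val M (detPol π') Rbar s''
      ≤ M.disc * ∑ s', M.T s'' (π' s'') s' *
          (Val M (detPol πT) Rbar s' - Val M (detPol π') Rbar s') := by
    intro s''
    have hsub : ∑ s', M.T s'' (π' s'') s' *
          (Val M (detPol πT) Rbar s' - Val M (detPol π') Rbar s')
        = ∑ s', M.T s'' (π' s'') s' * Val M (detPol πT) Rbar s'
          - ∑ s', M.T s'' (π' s'') s' * Val M (detPol π') Rbar s' := by
      rw [← Finset.sum_sub_distrib]
      exact Finset.sum_congr rfl fun s' _ => by ring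
    rw [hsub, mul_sub]
    have h2 := bellman_det M π' Rbar s''
    by_cases hcase : s'' = s
    · subst hcase
      rw [hπ's] at h2 ⊢
      have h1 : Val M (detPol πT) Rbar s''
          ≤ Rbar s'' a + M.disc * ∑ s', M.T s'' a s' * Val M (detPol πT) Rbar s' := by
        rw [← hQdef]; exact le_of_lt hQ
      linarith
    · have h1 := bellman_det M πT Rbar s''
      rw [hπ'ne s'' hcase] at h2 ⊢
      linarith
  have hle := contraction_nonpos M.disc M.disc_nonneg M.disc_lt_one
    (fun s'' s' => M.T s'' (π' s'') s') (fun s'' s' => M.T_nonneg s'' (π' s'') s')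
    (fun s'' => M.T_sum_one s'' (π' s''))
    (fun s'' => Val M (detPol πT) Rbar s'' - Val M (detPol π') Rbar s'') main
  have hWV : ∀ s', Val M (detPol πT) Rbar s' ≤ Val M (detPol π') Rbar s' := by
    intro s'
    have h := hle s'
    linarith
  have hWs : Qval M (detPol πT) Rbar s a ≤ Val M (detPol π') Rbar s := by
    have h2 := bellman_det M π' Rbar s
    rw [hπ's] at h2
    have hsl : ∑ s', M.T s a s' * Val M (detPol πT) Rbar s'
        ≤ ∑ s', M.T s a s' * Val M (detPol π') Rbar s' :=
      Finset.sum_le_sum fun s' _ => mul_le_mul_of_nonneg_left (hWV s') (M.T_nonneg s a s')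
    rw [hQdef]
    nlinarith [mul_le_mul_of_nonneg_left hsl M.disc_nonneg]
  have hWle : Val M (detPol π') Rbar s ≤ Vstar M Rbar s :=
    le_csSup (bddAbove_vals M Rbar s) ⟨detPol π', detPol_isPolicy π', rfl⟩
  have hVs : Val M (detPol πT) Rbar s = Vstar M Rbar s := hopt s
  linarith


/-- **Invariance constraints preserve optimality of the target policy.** -/
theorem invariance_preserves_target_optimality
    (M : MDP S A) (Rbar R : S → A → ℝ) (πT : S → A)
    (hπT : IsOptimal M Rbar (detPol πT))
    (hinv : ∀ s a,
      Qval M (detPol πT) R s a - Val M (detPol πT) R s ≤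
        Qval M (detPol πT) Rbar s a - Val M (detPol πT) Rbar s) :
    IsOptimal M R (detPol πT) := by
  have hA := adv_nonpos_of_optimal M Rbar πT hπT
  apply optimal_of_adv_nonpos
  intro s a
  have h1 := hinv s a
  have h2 := hA s a
  linarith
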